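/- The diagonal approximate preconditioned linear attention and diagonal approximate preconditioned DeltaNet states can differ: in dimension 2, with λ = 1, v_1 = k_1 = (1,1)^T, the diagonal approximation Ĝ_1 = 2I gives the PLA state S_1^{APLA} = (1/2) 𝟙𝟙^T while the PDN state (with k̃_1 = (Ĝ_0^{-1} k_1)/(1 + k_1^T Ĝ_0^{-1} k_1) = (1/3)𝟙) is S_1^{APDN} = (1/3) 𝟙𝟙^T, so S_1^{APLA} ≠ S_1^{APDN}. -/
import Mathlib


open Matrix

/-- Diagonal approximate PLA and PDN states can differ: a concrete 2-dimensional
counterexample with `λ = 1`, `v₁ = k₁ = (1,1)ᵀ`. -/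
theorem stmt_4
    (one2 : Fin 2 → ℝ) (hone2 : one2 = ![1, 1])
    (G0hat G1hat : Matrix (Fin 2) (Fin 2) ℝ)
    (hG0 : G0hat = (1 : Matrix (Fin 2) (Fin 2) ℝ))
    (hG1 : G1hat = (2 : ℝ) • (1 : Matrix (Fin 2) (Fin 2) ℝ))
    (SAPLA : Matrix (Fin 2) (Fin 2) ℝ)
    (hSAPLA : SAPLA = vecMulVec one2 one2 * G1hat⁻¹)
    (ktilde : Fin 2 → ℝ)
    (hktilde : ktilde = (1 + one2 ⬝ᵥ G0hat⁻¹.mulVec one2)⁻¹ • G0hat⁻¹.mulVec one2)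
    (SAPDN : Matrix (Fin 2) (Fin 2) ℝ)
    (hSAPDN : SAPDN =
      vecMulVec (one2 - (0 : Matrix (Fin 2) (Fin 2) ℝ).mulVec one2) ktilde) :
    SAPLA = (2 : ℝ)⁻¹ • vecMulVec one2 one2 ∧
    SAPDN = (3 : ℝ)⁻¹ • vecMulVec one2 one2 ∧
    SAPLA ≠ SAPDN := by
  have hG1inv : G1hat⁻¹ = (2:ℝ)⁻¹ • (1 : Matrix (Fin 2) (Fin 2) ℝ) := by
    rw [hG1]
    apply inv_eq_right_inv
    rw [smul_mul_smul_comm]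
    norm_num
  have hG0inv : G0hat⁻¹ = (1 : Matrix (Fin 2) (Fin 2) ℝ) := by
    rw [hG0, inv_one]
  have hdot : one2 ⬝ᵥ G0hat⁻¹.mulVec one2 = 2 := by
    subst hone2
    simp [hG0inv, dotProduct, Fin.sum_univ_two]
    norm_num
  have h1 : SAPLA = (2 : ℝ)⁻¹ • vecMulVec one2 one2 := by
    rw [hSAPLA, hG1inv, Matrix.mul_smul, mul_one]
  have h2 : SAPDN = (3 : ℝ)⁻¹ • vecMulVec one2 one2 := by
    rw [hSAPDN, hktilde, hdot, hG0inv]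
    ext i j
    simp [vecMulVec]
    ring
  refine ⟨h1, h2, ?_⟩
  rw [h1, h2]
  intro h
  have := congrFun (congrFun h 0) 0
  simp [vecMulVec, hone2] at this
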